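/- Let (𝒟₁, π₁) and (𝒟₂, π₂) be closed representations of a unital *-algebra A on the same complex Hilbert space H. If cl(π₁(a)) = cl(π₂(a)) (equality of graphs of the closures) for every a ∈ A with a = a*, then the two representations are equal: 𝒟₁ = 𝒟₂ and π₁(a) = π₂(a) for all a ∈ A. (The set of symmetric elements is a strong generating set of A.) -/

import Mathlib

/-- A representation of a unital `⋆`-algebra `A` on a complex Hilbert space `H`:
a dense subspace `dom ⊆ H` together with a unital algebra homomorphism `π` from `A` into the
endomorphisms of `dom` satisfying `⟪π a ξ, η⟫ = ⟪ξ, π (star a) η⟫`. -/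
structure HilbertRep (A : Type*) [Ring A] [Algebra ℂ A] [StarRing A] [StarModule ℂ A]
    (H : Type*) [NormedAddCommGroup H] [InnerProductSpace ℂ H] where
  dom : Submodule ℂ H
  dense : Dense (dom : Set H)
  π : A → (dom →ₗ[ℂ] dom)
  π_one : π 1 = LinearMap.id
  π_mul : ∀ a b : A, π (a * b) = (π a).comp (π b)
  π_add : ∀ a b : A, π (a + b) = π a + π b
  π_smul : ∀ (c : ℂ) (a : A), π (c • a) = c • π a
  π_star : ∀ (a : A) (ξ η : dom),
    (inner ℂ ((π a ξ : dom) : H) (η : H) : ℂ) = inner ℂ (ξ : H) ((π (star a) η : dom) : H)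

variable {A : Type*} [Ring A] [Algebra ℂ A] [StarRing A] [StarModule ℂ A]
variable {H : Type*} [NormedAddCommGroup H] [InnerProductSpace ℂ H]

/-- The operator `π a` of a representation, as a partially defined (unbounded) linear
operator on `H`. -/
def HilbertRep.op (ρ : HilbertRep A H) (a : A) : H →ₗ.[ℂ] H :=
  ⟨ρ.dom, ρ.dom.subtype.comp (ρ.π a)⟩

/-- A representation is *closed* if its domain is the intersection of the domains of the
closures of all the operators `π a`. -/
def HilbertRep.IsClosedRep (ρ : HilbertRep A H) : Prop :=
  (ρ.dom : Set H) = ⋂ a : A, ((ρ.op a).closure.domain : Set H)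

/-- Two closed representations of a unital `⋆`-algebra on the same Hilbert space agree as soon
as the closures `cl (π₁ a)` and `cl (π₂ a)` agree for all symmetric elements `a = a*`. -/
local notation "⟪" x ", " y "⟫" => @inner ℂ _ _ x y

theorem HilbertRep.op_apply (ρ : HilbertRep A H) (a : A) (x : ρ.dom) :
    ρ.op a x = ((ρ.π a x : ρ.dom) : H) := rfl

/-- Any point in the closure of the graph of `op a` satisfies the adjoint relation against
elements of the domain. -/
theorem HilbertRep.graph_inner_eq (ρ : HilbertRep A H) (a : A) (η : ρ.dom) {p : H × H}
    (hp : p ∈ closure ((ρ.op a).graph : Set (H × H))) :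
    ⟪((ρ.π (star a) η : ρ.dom) : H), p.1⟫ = ⟪(η : H), p.2⟫ := by
  have hc1 : Continuous fun q : H × H => ⟪((ρ.π (star a) η : ρ.dom) : H), q.1⟫ :=
    Continuous.inner continuous_const continuous_fst
  have hc2 : Continuous fun q : H × H => ⟪(η : H), q.2⟫ :=
    Continuous.inner continuous_const continuous_snd
  have hclosed : IsClosed {q : H × H | ⟪((ρ.π (star a) η : ρ.dom) : H), q.1⟫ = ⟪(η : H), q.2⟫} :=
    isClosed_eq hc1 hc2
  have hsub : ((ρ.op a).graph : Set (H × H)) ⊆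
      {q : H × H | ⟪((ρ.π (star a) η : ρ.dom) : H), q.1⟫ = ⟪(η : H), q.2⟫} := by
    rintro q hq
    rw [SetLike.mem_coe, LinearPMap.mem_graph_iff] at hq
    obtain ⟨x, hx1, hx2⟩ := hq
    show ⟪_, q.1⟫ = ⟪_, q.2⟫
    rw [← hx1, ← hx2]
    have := ρ.π_star (star a) η x
    rw [star_star] at this
    exact this
  exact closure_minimal hsub hclosed hp

theorem HilbertRep.op_isClosable (ρ : HilbertRep A H) (a : A) : (ρ.op a).IsClosable := by
  refine ⟨((ρ.op a).graph.topologicalClosure).toLinearPMap,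
    (Submodule.toLinearPMap_graph_eq _ ?_).symm⟩
  rintro ⟨x, y⟩ hxy hx0
  simp only at hx0
  subst hx0
  have hxy' : ((0 : H), y) ∈ closure ((ρ.op a).graph : Set (H × H)) := by
    rwa [← Submodule.topologicalClosure_coe]
  have hz : ∀ η : ρ.dom, ⟪(η : H), y⟫ = (0 : ℂ) := by
    intro η
    have := ρ.graph_inner_eq a η hxy'
    simpa using this.symm
  have hfun : (fun z : H => ⟪z, y⟫) = fun _ => (0 : ℂ) := by
    refine Continuous.ext_on ρ.dense (Continuous.inner continuous_id continuous_const)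
      continuous_const ?_
    intro z hz'
    exact hz ⟨z, hz'⟩
  have := congrFun hfun y
  rwa [inner_self_eq_zero] at this

/-- The cross adjoint relation for symmetric elements. -/
theorem cross_sym (ρ₁ ρ₂ : HilbertRep A H)
    (h : ∀ a : A, star a = a → (ρ₁.op a).closure = (ρ₂.op a).closure)
    (c : A) (hc : star c = c) (ξ : ρ₁.dom) (η : ρ₂.dom) :
    ⟪((ρ₁.π c ξ : ρ₁.dom) : H), (η : H)⟫ = ⟪(ξ : H), ((ρ₂.π c η : ρ₂.dom) : H)⟫ := by
  have hmem : ((ξ : H), ((ρ₁.π c ξ : ρ₁.dom) : H)) ∈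
      closure ((ρ₂.op c).graph : Set (H × H)) := by
    have h1 : ((ξ : H), ((ρ₁.π c ξ : ρ₁.dom) : H)) ∈ (ρ₁.op c).graph := (ρ₁.op c).mem_graph ξ
    have h2 := (ρ₁.op c).graph.le_topologicalClosure h1
    rw [(ρ₁.op_isClosable c).graph_closure_eq_closure_graph, h c hc,
      ← (ρ₂.op_isClosable c).graph_closure_eq_closure_graph] at h2
    rwa [← Submodule.topologicalClosure_coe]
  have := ρ₂.graph_inner_eq c η hmem
  rw [hc] at this
  calc ⟪((ρ₁.π c ξ : ρ₁.dom) : H), (η : H)⟫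
      = starRingEnd ℂ ⟪(η : H), ((ρ₁.π c ξ : ρ₁.dom) : H)⟫ := (inner_conj_symm _ _).symm
    _ = starRingEnd ℂ ⟪((ρ₂.π c η : ρ₂.dom) : H), (ξ : H)⟫ := by rw [this]
    _ = ⟪(ξ : H), ((ρ₂.π c η : ρ₂.dom) : H)⟫ := inner_conj_symm _ _

/-- Decomposition of an element into symmetric parts. -/
theorem decomp (a : A) : ∃ s t : A, star s = s ∧ star t = t ∧
    a = s + Complex.I • t ∧ star a = s + (-Complex.I) • t := by
  have c1 : Complex.I * (-(Complex.I) * 2⁻¹) = 2⁻¹ := by simp [Complex.ext_iff]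
  have c2 : star (-(Complex.I) * 2⁻¹ : ℂ) = Complex.I * 2⁻¹ := by
    rw [Complex.star_def]; simp [Complex.ext_iff]
  have c3 : star (2⁻¹ : ℂ) = 2⁻¹ := by rw [Complex.star_def]; simp [Complex.ext_iff]
  refine ⟨(2⁻¹ : ℂ) • (a + star a), (-(Complex.I) * 2⁻¹ : ℂ) • (a - star a), ?_, ?_, ?_, ?_⟩
  · rw [star_smul, star_add, star_star, c3]
    module
  · rw [star_smul, star_sub, star_star, c2]
    module
  · rw [smul_smul, c1]
    module
  · rw [smul_smul, show -Complex.I * (-Complex.I * 2⁻¹) = -(2⁻¹:ℂ) by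
      simp [Complex.ext_iff]]
    module
  
/-- The cross adjoint relation for general elements. -/
theorem cross (ρ₁ ρ₂ : HilbertRep A H)
    (h : ∀ a : A, star a = a → (ρ₁.op a).closure = (ρ₂.op a).closure)
    (a : A) (ξ : ρ₁.dom) (η : ρ₂.dom) :
    ⟪((ρ₁.π a ξ : ρ₁.dom) : H), (η : H)⟫ = ⟪(ξ : H), ((ρ₂.π (star a) η : ρ₂.dom) : H)⟫ := by
  obtain ⟨s, t, hs, ht, ha, hastar⟩ := decomp a
  have hπ1 : (ρ₁.π a : ρ₁.dom →ₗ[ℂ] ρ₁.dom) = ρ₁.π s + Complex.I • ρ₁.π t := by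
    rw [ha]; simp only [ρ₁.π_add, ρ₁.π_smul]
  have hπ2 : (ρ₂.π (star a) : ρ₂.dom →ₗ[ℂ] ρ₂.dom) = ρ₂.π s + (-Complex.I) • ρ₂.π t := by
    rw [hastar]; simp only [ρ₂.π_add, ρ₂.π_smul]
  rw [hπ1, hπ2]
  simp only [LinearMap.add_apply, LinearMap.smul_apply,
    Submodule.coe_add, Submodule.coe_smul, inner_add_left,
    inner_add_right, inner_smul_left, inner_smul_right]
  rw [cross_sym ρ₁ ρ₂ h s hs ξ η, cross_sym ρ₁ ρ₂ h t ht ξ η]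
  simp [Complex.conj_I]

theorem mem_closure_graph_sym (ρ₁ ρ₂ : HilbertRep A H)
    (h : ∀ a : A, star a = a → (ρ₁.op a).closure = (ρ₂.op a).closure)
    (c : A) (hc : star c = c) (ξ : ρ₁.dom) :
    ((ξ : H), ((ρ₁.π c ξ : ρ₁.dom) : H)) ∈ closure ((ρ₂.op c).graph : Set (H × H)) := by
  have h1 : ((ξ : H), ((ρ₁.π c ξ : ρ₁.dom) : H)) ∈ (ρ₁.op c).graph := (ρ₁.op c).mem_graph ξ
  have h2 := (ρ₁.op c).graph.le_topologicalClosure h1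
  rw [(ρ₁.op_isClosable c).graph_closure_eq_closure_graph, h c hc,
    ← (ρ₂.op_isClosable c).graph_closure_eq_closure_graph] at h2
  rwa [← Submodule.topologicalClosure_coe]

/-- The key lemma: for `ξ` in the domain of `ρ₁`, the pair `(ξ, π₁ a ξ)` lies in the closure of
the graph of `π₂ a`, for every `a`. -/
theorem key_mem (ρ₁ ρ₂ : HilbertRep A H)
    (h : ∀ a : A, star a = a → (ρ₁.op a).closure = (ρ₂.op a).closure)
    (a : A) (ξ : ρ₁.dom) :
    ((ξ : H), ((ρ₁.π a ξ : ρ₁.dom) : H)) ∈ closure ((ρ₂.op a).graph : Set (H × H)) := by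
  set b : A := 1 + star a * a with hb_def
  have hb : star b = b := by
    rw [hb_def, star_add, star_one, star_mul, star_star]
  have hmemb := mem_closure_graph_sym ρ₁ ρ₂ h b hb ξ
  obtain ⟨q, hqmem, hqlim⟩ := mem_closure_iff_seq_limit.mp hmemb
  have hex : ∀ n, ∃ z : ρ₂.dom, ((z : H), ((ρ₂.π b z : ρ₂.dom) : H)) = q n := by
    intro n
    have := hqmem n
    rw [SetLike.mem_coe, LinearPMap.mem_graph_iff] at this
    obtain ⟨y, hy1, hy2⟩ := this
    exact ⟨y, by rw [Prod.ext_iff]; exact ⟨hy1, hy2⟩⟩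
  choose ζ hζ using hex
  have hζ1 : Filter.Tendsto (fun n => ((ζ n : H))) Filter.atTop (nhds (ξ : H)) := by
    have h' := (continuous_fst.tendsto _).comp hqlim
    have he : (fun n => ((ζ n : H))) = Prod.fst ∘ q := funext fun n => by
      show _ = (q n).1
      rw [← hζ n]
    rwa [he]
  have hζ2 : Filter.Tendsto (fun n => ((ρ₂.π b (ζ n) : ρ₂.dom) : H)) Filter.atTop
      (nhds ((ρ₁.π b ξ : ρ₁.dom) : H)) := by
    have h' := (continuous_snd.tendsto _).comp hqlim
    have he : (fun n => ((ρ₂.π b (ζ n) : ρ₂.dom) : H)) = Prod.snd ∘ q :=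
      funext fun n => by
        show _ = (q n).2
        rw [← hζ n]
    rwa [he]
  set u : ℕ → H := fun n => ((ρ₂.π b (ζ n) : ρ₂.dom) : H) - (ζ n : H) with hu_def
  set v : H := ((ρ₁.π b ξ : ρ₁.dom) : H) - (ξ : H) with hv_def
  have hu : Filter.Tendsto u Filter.atTop (nhds v) := hζ2.sub hζ1
  -- the value of `π (star a * a)` in terms of `π b`
  have hub : ∀ n, ((ρ₂.π (star a * a) (ζ n) : ρ₂.dom) : H) = u n := by
    intro n
    have hb2 : ρ₂.π b = ρ₂.π 1 + ρ₂.π (star a * a) := ρ₂.π_add 1 (star a * a)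
    have : ρ₂.π b (ζ n) = ζ n + ρ₂.π (star a * a) (ζ n) := by
      rw [hb2]; simp [ρ₂.π_one]
    rw [hu_def]
    simp only [this, Submodule.coe_add]
    abel
  have hvb : ((ρ₁.π (star a * a) ξ : ρ₁.dom) : H) = v := by
    have hb2 : ρ₁.π b = ρ₁.π 1 + ρ₁.π (star a * a) := ρ₁.π_add 1 (star a * a)
    have : ρ₁.π b ξ = ξ + ρ₁.π (star a * a) ξ := by
      rw [hb2]; simp [ρ₁.π_one]
    rw [hv_def]
    simp only [this, Submodule.coe_add]
    abel
  -- the crucial estimate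
  have est : ∀ n, ‖((ρ₂.π a (ζ n) : ρ₂.dom) : H) - ((ρ₁.π a ξ : ρ₁.dom) : H)‖ ^ 2 ≤
      ‖(ζ n : H) - (ξ : H)‖ * ‖u n‖ + ‖(ξ : H)‖ * ‖v - u n‖ := by
    intro n
    set z : ρ₂.dom := ζ n
    set D : H := ((ρ₂.π a z : ρ₂.dom) : H) - ((ρ₁.π a ξ : ρ₁.dom) : H) with hD_def
    have T1 : ⟪((ρ₂.π a z : ρ₂.dom) : H), ((ρ₂.π a z : ρ₂.dom) : H)⟫ = ⟪(z : H), u n⟫ := by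
      rw [ρ₂.π_star a z (ρ₂.π a z),
        show ρ₂.π (star a) (ρ₂.π a z) = ρ₂.π (star a * a) z by rw [ρ₂.π_mul]; rfl, hub n]
    have T3 : ⟪((ρ₁.π a ξ : ρ₁.dom) : H), ((ρ₂.π a z : ρ₂.dom) : H)⟫ = ⟪(ξ : H), u n⟫ := by
      rw [cross ρ₁ ρ₂ h a ξ (ρ₂.π a z),
        show ρ₂.π (star a) (ρ₂.π a z) = ρ₂.π (star a * a) z by rw [ρ₂.π_mul]; rfl, hub n]
    have T2 : ⟪((ρ₂.π a z : ρ₂.dom) : H), ((ρ₁.π a ξ : ρ₁.dom) : H)⟫ = ⟪u n, (ξ : H)⟫ := by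
      rw [← inner_conj_symm, T3, inner_conj_symm]
    have T4 : ⟪((ρ₁.π a ξ : ρ₁.dom) : H), ((ρ₁.π a ξ : ρ₁.dom) : H)⟫ = ⟪(ξ : H), v⟫ := by
      rw [ρ₁.π_star a ξ (ρ₁.π a ξ),
        show ρ₁.π (star a) (ρ₁.π a ξ) = ρ₁.π (star a * a) ξ by rw [ρ₁.π_mul]; rfl, hvb]
    have hDD : ⟪D, D⟫ = ⟪(z : H) - (ξ : H), u n⟫ + ⟪(ξ : H), v - u n⟫ +
        (⟪(ξ : H), u n⟫ - ⟪u n, (ξ : H)⟫) := by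
      rw [hD_def]
      simp only [inner_sub_left, inner_sub_right]
      rw [T1, T2, T3, T4]
      ring
    have hnorm : ‖D‖ ^ 2 = (⟪D, D⟫).re := by
      rw [← inner_self_eq_norm_sq (𝕜 := ℂ)]
      rfl
    have him : (⟪(ξ : H), u n⟫ - ⟪u n, (ξ : H)⟫).re = 0 := by
      rw [← inner_conj_symm (u n) (ξ : H), Complex.sub_re, Complex.conj_re, sub_self]
    rw [hnorm, hDD]
    simp only [Complex.add_re]
    rw [him, add_zero]
    have b1 : (⟪(z : H) - (ξ : H), u n⟫).re ≤ ‖(ζ n : H) - (ξ : H)‖ * ‖u n‖ := by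
      refine le_trans (Complex.re_le_norm _) ?_
      exact norm_inner_le_norm _ _
    have b2 : (⟪(ξ : H), v - u n⟫).re ≤ ‖(ξ : H)‖ * ‖v - u n‖ := by
      refine le_trans (Complex.re_le_norm _) ?_
      exact norm_inner_le_norm _ _
    exact add_le_add b1 b2
  -- convergence of the bound
  have hbound : Filter.Tendsto
      (fun n => ‖(ζ n : H) - (ξ : H)‖ * ‖u n‖ + ‖(ξ : H)‖ * ‖v - u n‖)
      Filter.atTop (nhds 0) := by
    have l1 : Filter.Tendsto (fun n => ‖(ζ n : H) - (ξ : H)‖) Filter.atTop (nhds 0) := by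
      have := (hζ1.sub (tendsto_const_nhds (x := (ξ : H)))).norm
      simpa using this
    have l2 : Filter.Tendsto (fun n => ‖u n‖) Filter.atTop (nhds ‖v‖) := hu.norm
    have l3 : Filter.Tendsto (fun n => ‖v - u n‖) Filter.atTop (nhds 0) := by
      have := ((tendsto_const_nhds (x := v)).sub hu).norm
      simpa using this
    have := (l1.mul l2).add ((tendsto_const_nhds (x := ‖(ξ : H)‖)).mul l3)
    simpa using this
  have hD2 : Filter.Tendsto
      (fun n => ‖((ρ₂.π a (ζ n) : ρ₂.dom) : H) - ((ρ₁.π a ξ : ρ₁.dom) : H)‖ ^ 2)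
      Filter.atTop (nhds 0) :=
    squeeze_zero (fun n => sq_nonneg _) est hbound
  have hD : Filter.Tendsto
      (fun n => ‖((ρ₂.π a (ζ n) : ρ₂.dom) : H) - ((ρ₁.π a ξ : ρ₁.dom) : H)‖)
      Filter.atTop (nhds 0) := by
    have := hD2.sqrt
    rw [Real.sqrt_zero] at this
    convert this using 2 with n
    rw [Real.sqrt_sq (norm_nonneg _)]
  have htend2 : Filter.Tendsto (fun n => ((ρ₂.π a (ζ n) : ρ₂.dom) : H)) Filter.atTop
      (nhds ((ρ₁.π a ξ : ρ₁.dom) : H)) := by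
    rw [tendsto_iff_norm_sub_tendsto_zero]
    exact hD
  refine mem_closure_iff_seq_limit.mpr
    ⟨fun n => ((ζ n : H), ((ρ₂.π a (ζ n) : ρ₂.dom) : H)), fun n => ?_, ?_⟩
  · exact (ρ₂.op a).mem_graph (ζ n)
  · exact hζ1.prodMk_nhds htend2

theorem dom_subset (ρ₁ ρ₂ : HilbertRep A H)
    (h : ∀ a : A, star a = a → (ρ₁.op a).closure = (ρ₂.op a).closure)
    (h₂ : ρ₂.IsClosedRep) : (ρ₁.dom : Set H) ⊆ (ρ₂.dom : Set H) := by
  intro x hx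
  rw [h₂]
  refine Set.mem_iInter.2 fun a => ?_
  have hm := key_mem ρ₁ ρ₂ h a ⟨x, hx⟩
  rw [← Submodule.topologicalClosure_coe, SetLike.mem_coe,
    (ρ₂.op_isClosable a).graph_closure_eq_closure_graph] at hm
  exact LinearPMap.mem_domain_of_mem_graph hm

theorem val_eq (ρ₁ ρ₂ : HilbertRep A H)
    (h : ∀ a : A, star a = a → (ρ₁.op a).closure = (ρ₂.op a).closure)
    (a : A) (ξ : ρ₁.dom) (ξ' : ρ₂.dom) (hx : (ξ : H) = (ξ' : H)) :
    ((ρ₁.π a ξ : ρ₁.dom) : H) = ((ρ₂.π a ξ' : ρ₂.dom) : H) := by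
  have h1 := key_mem ρ₁ ρ₂ h a ξ
  rw [← Submodule.topologicalClosure_coe, SetLike.mem_coe,
    (ρ₂.op_isClosable a).graph_closure_eq_closure_graph] at h1
  have h2 : (((ξ' : H)), ((ρ₂.π a ξ' : ρ₂.dom) : H)) ∈ (ρ₂.op a).closure.graph :=
    LinearPMap.le_graph_of_le (ρ₂.op a).le_closure ((ρ₂.op a).mem_graph ξ')
  exact (ρ₂.op a).closure.mem_graph_snd_inj h1 h2 hx

theorem eq_of_closures_eq_on_symmetric (ρ₁ ρ₂ : HilbertRep A H)
    (h₁ : ρ₁.IsClosedRep) (h₂ : ρ₂.IsClosedRep)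
    (h : ∀ a : A, star a = a → (ρ₁.op a).closure = (ρ₂.op a).closure) :
    ρ₁.dom = ρ₂.dom ∧ ∀ a : A, ρ₁.op a = ρ₂.op a := by
  have h' : ∀ a : A, star a = a → (ρ₂.op a).closure = (ρ₁.op a).closure :=
    fun a ha => (h a ha).symm
  have hdom : ρ₁.dom = ρ₂.dom := by
    apply SetLike.coe_injective
    exact Set.Subset.antisymm (dom_subset ρ₁ ρ₂ h h₂) (dom_subset ρ₂ ρ₁ h' h₁)
  refine ⟨hdom, fun a => ?_⟩
  apply LinearPMap.ext
  · exact hdom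
  · intro x hx hy
    exact val_eq ρ₁ ρ₂ h a ⟨x, hx⟩ ⟨x, hy⟩ rfl
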